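/- arXiv:0902.4589 — 2 statements merged into one kernel-verified Lean document; each statement's English description precedes it below -/
import Mathlib

section
/- Let m ≥ 4 be an integer. For every c ∈ (0,1) there is a unique θ ∈ (2π/m, 2π/(m−1)) such that c = r_θ^{m−1}·sin(mθ)/sin θ, where r_θ denotes the unique positive real root of the polynomial g_θ(t) = (sin((m−1)θ)/sin θ)·t^m − (sin(mθ)/sin θ)·t^{m−1} + 1. For m = 3 the same uniqueness statement holds for every c ∈ (0, 3/4). -/
open Real

noncomputable section

/-- The polynomial `g_θ(t) = (sin((m-1)θ)/sin θ)·t^m - (sin(mθ)/sin θ)·t^{m-1} + 1`. -/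
def gpoly (m : ℕ) (θ t : ℝ) : ℝ :=
  (Real.sin (((m : ℝ) - 1) * θ) / Real.sin θ) * t ^ m
    - (Real.sin ((m : ℝ) * θ) / Real.sin θ) * t ^ (m - 1) + 1

lemma sign_facts (m : ℕ) (hm : 3 ≤ m) {θ : ℝ}
    (hθ : θ ∈ Set.Ioo (2 * π / (m : ℝ)) (2 * π / ((m : ℝ) - 1))) :
    0 < Real.sin θ ∧ 0 < Real.sin ((m : ℝ) * θ) ∧ Real.sin (((m : ℝ) - 1) * θ) < 0 := by
  obtain ⟨h1, h2⟩ := hθ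
  have hπ : 0 < π := Real.pi_pos
  have hm3 : (3:ℝ) ≤ (m:ℝ) := by exact_mod_cast hm
  have hm0 : (0:ℝ) < (m:ℝ) := by linarith
  have hm1 : (0:ℝ) < (m:ℝ) - 1 := by linarith
  have hθpos : 0 < θ := lt_trans (by positivity) h1
  have hmθ : 2 * π < (m:ℝ) * θ := by
    rw [div_lt_iff₀ hm0] at h1; linarith [h1]
  have hm1θ : ((m:ℝ) - 1) * θ < 2 * π := by
    rw [lt_div_iff₀ hm1] at h2; linarith [h2]
  have hθπ : θ < π := by nlinarith
  have hS1 : 0 < Real.sin θ := Real.sin_pos_of_pos_of_lt_pi hθpos hθπ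
  refine ⟨hS1, ?_, ?_⟩
  · have h3 : Real.sin ((m:ℝ) * θ) = Real.sin ((m:ℝ) * θ - 2 * π) := by
      rw [Real.sin_sub_two_pi]
    rw [h3]
    apply Real.sin_pos_of_pos_of_lt_pi (by linarith)
    nlinarith
  · have h4 : Real.sin (((m:ℝ) - 1) * θ) = - Real.sin (2 * π - ((m:ℝ) - 1) * θ) := by
      rw [Real.sin_sub]; simp
    rw [h4, neg_lt, neg_zero]
    apply Real.sin_pos_of_pos_of_lt_pi (by linarith)
    nlinarith

lemma gpoly_strictAnti (m : ℕ) (hm : 3 ≤ m) {θ : ℝ}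
    (hS1 : 0 < Real.sin θ) (hSm : 0 < Real.sin ((m : ℝ) * θ))
    (hS' : Real.sin (((m : ℝ) - 1) * θ) < 0)
    {x y : ℝ} (hx : 0 ≤ x) (hxy : x < y) : gpoly m θ y < gpoly m θ x := by
  have hA : Real.sin (((m : ℝ) - 1) * θ) / Real.sin θ < 0 := div_neg_of_neg_of_pos hS' hS1
  have hB : 0 < Real.sin ((m : ℝ) * θ) / Real.sin θ := div_pos hSm hS1
  have h1 : x ^ m < y ^ m := pow_lt_pow_left₀ hxy hx (by omega)
  have h2 : x ^ (m-1) < y ^ (m-1) := pow_lt_pow_left₀ hxy hx (by omega)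
  unfold gpoly
  nlinarith [mul_lt_mul_of_neg_left h1 hA, mul_lt_mul_of_pos_left h2 hB]

lemma root_unique (m : ℕ) (hm : 3 ≤ m) {θ : ℝ}
    (hS1 : 0 < Real.sin θ) (hSm : 0 < Real.sin ((m : ℝ) * θ))
    (hS' : Real.sin (((m : ℝ) - 1) * θ) < 0)
    {s r : ℝ} (hs : 0 < s) (hr : 0 < r)
    (hgs : gpoly m θ s = 0) (hgr : gpoly m θ r = 0) : s = r := by
  rcases lt_trichotomy s r with h | h | h
  · exfalso
    have := gpoly_strictAnti m hm hS1 hSm hS' hs.le h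
    rw [hgs, hgr] at this; exact lt_irrefl 0 this
  · exact h
  · exfalso
    have := gpoly_strictAnti m hm hS1 hSm hS' hr.le h
    rw [hgs, hgr] at this; exact lt_irrefl 0 this

lemma forward_eq (m : ℕ) (hm : 3 ≤ m) {θ c r : ℝ}
    (hS1 : 0 < Real.sin θ) (hSm : 0 < Real.sin ((m : ℝ) * θ))
    (hS' : Real.sin (((m : ℝ) - 1) * θ) < 0)
    (hc : 0 < c) (hr : 0 < r) (hroot : gpoly m θ r = 0)
    (hcr : c = r ^ (m - 1) * Real.sin ((m : ℝ) * θ) / Real.sin θ) :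
    (1 - c) ^ (m - 1) * Real.sin ((m : ℝ) * θ) ^ m
      = c ^ m * Real.sin θ * (- Real.sin (((m : ℝ) - 1) * θ)) ^ (m - 1) := by
  obtain ⟨k, rfl⟩ : ∃ k, m = k + 1 := ⟨m - 1, by omega⟩
  unfold gpoly at hroot
  simp only [Nat.add_sub_cancel] at *
  have hS10 : Real.sin θ ≠ 0 := ne_of_gt hS1
  set S1 := Real.sin θ with hS1def
  set Sm := Real.sin (((k+1 : ℕ):ℝ) * θ) with hSmdef
  set S' := Real.sin ((((k+1 : ℕ):ℝ) - 1) * θ) with hS'def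
  have hSm0 : Sm ≠ 0 := ne_of_gt hSm
  have hS'0 : S' ≠ 0 := ne_of_lt hS'
  have e2 : c * S1 = r ^ k * Sm := by
    rw [hcr]; field_simp
  have e1 : S' * r ^ (k+1) - Sm * r ^ k + S1 = 0 := by
    field_simp at hroot
    linarith [hroot]
  have e3 : S' * r * (c * S1) = (c - 1) * S1 * Sm := by
    have h5 : S' * (r ^ k * r) = (c-1) * S1 := by
      rw [pow_succ] at e1; linarith [e2, e1]
    calc S' * r * (c * S1) = (S' * (r ^ k * r)) * Sm := by rw [e2]; ring
    _ = (c-1) * S1 * Sm := by rw [h5]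
  have hrval : r = (1 - c) * Sm / (c * (-S')) := by
    rw [eq_div_iff (by simp [hc.ne', hS'0])]
    nlinarith [e3]
  have e4 : ((1-c) * Sm)^k * Sm = c * S1 * (c * (-S'))^k := by
    have hcS' : c * (-S') ≠ 0 := by simp [hc.ne', hS'0]
    have h6 : ((1-c) * Sm / (c * (-S')))^k * Sm = c * S1 := by
      rw [← hrval, ← e2]
    rw [div_pow, div_mul_eq_mul_div, div_eq_iff (pow_ne_zero _ hcS')] at h6
    linarith [h6]
  calc (1-c)^k * Sm^(k+1) = ((1-c)*Sm)^k * Sm := by rw [mul_pow]; ring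
  _ = c * S1 * (c * (-S'))^k := e4
  _ = c^(k+1) * S1 * (-S')^k := by rw [mul_pow]; ring

lemma backward_eq (m : ℕ) (hm : 3 ≤ m) {θ c : ℝ}
    (hS1 : 0 < Real.sin θ) (hSm : 0 < Real.sin ((m : ℝ) * θ))
    (hS' : Real.sin (((m : ℝ) - 1) * θ) < 0)
    (hc : 0 < c) (hc1 : c < 1)
    (hEQ : (1 - c) ^ (m - 1) * Real.sin ((m : ℝ) * θ) ^ m
      = c ^ m * Real.sin θ * (- Real.sin (((m : ℝ) - 1) * θ)) ^ (m - 1)) :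
    ∃ r : ℝ, 0 < r ∧ gpoly m θ r = 0 ∧
      c = r ^ (m - 1) * Real.sin ((m : ℝ) * θ) / Real.sin θ := by
  obtain ⟨k, rfl⟩ : ∃ k, m = k + 1 := ⟨m - 1, by omega⟩
  unfold gpoly
  simp only [Nat.add_sub_cancel] at *
  have hS10 : Real.sin θ ≠ 0 := ne_of_gt hS1
  set S1 := Real.sin θ with hS1def
  set Sm := Real.sin (((k+1 : ℕ):ℝ) * θ) with hSmdef
  set S' := Real.sin ((((k+1 : ℕ):ℝ) - 1) * θ) with hS'def
  have hSm0 : Sm ≠ 0 := ne_of_gt hSm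
  have hS'0 : S' ≠ 0 := ne_of_lt hS'
  have hS'neg : 0 < -S' := by linarith
  set r := (1 - c) * Sm / (c * (-S')) with hrdef
  have hrpos : 0 < r := div_pos (mul_pos (by linarith) hSm) (mul_pos hc hS'neg)
  have hcS' : c * (-S') ≠ 0 := ne_of_gt (mul_pos hc hS'neg)
  have hpow : r ^ k = c * S1 / Sm := by
    rw [hrdef, div_pow, div_eq_div_iff (pow_ne_zero _ hcS') hSm0, mul_pow, mul_pow]
    linear_combination hEQ
  refine ⟨r, hrpos, ?_, ?_⟩
  · rw [pow_succ, hpow, hrdef]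
    field_simp
    ring
  · rw [hpow]
    field_simp

def Lfun (m : ℕ) (θ : ℝ) : ℝ :=
  (m : ℝ) * Real.log (Real.sin ((m : ℝ) * θ)) - Real.log (Real.sin θ)
    - ((m : ℝ) - 1) * Real.log (- Real.sin (((m : ℝ) - 1) * θ))

lemma Lfun_hasDerivAt (m : ℕ) {θ : ℝ}
    (hS1 : 0 < Real.sin θ) (hSm : 0 < Real.sin ((m : ℝ) * θ))
    (hS' : Real.sin (((m : ℝ) - 1) * θ) < 0) :
    HasDerivAt (Lfun m)
      ((m:ℝ) * ((Real.sin ((m:ℝ)*θ))⁻¹ * (Real.cos ((m:ℝ)*θ) * (m:ℝ)))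
        - (Real.sin θ)⁻¹ * Real.cos θ
        - ((m:ℝ)-1) * ((- Real.sin (((m:ℝ)-1)*θ))⁻¹ * (-(Real.cos (((m:ℝ)-1)*θ) * ((m:ℝ)-1))))) θ := by
  have h1 : HasDerivAt (fun x : ℝ => (m:ℝ) * x) (m:ℝ) θ := by
    simpa using (hasDerivAt_id θ).const_mul (m:ℝ)
  have h2 : HasDerivAt (fun x : ℝ => Real.sin ((m:ℝ) * x)) (Real.cos ((m:ℝ)*θ) * (m:ℝ)) θ :=
    (Real.hasDerivAt_sin ((m:ℝ)*θ)).comp θ h1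
  have h3 : HasDerivAt (fun x : ℝ => Real.log (Real.sin ((m:ℝ) * x)))
      ((Real.sin ((m:ℝ)*θ))⁻¹ * (Real.cos ((m:ℝ)*θ) * (m:ℝ))) θ := by
    have := (Real.hasDerivAt_log (ne_of_gt hSm)).comp θ h2
    simpa [Function.comp_def, div_eq_inv_mul] using this
  have h4 : HasDerivAt (fun x : ℝ => Real.log (Real.sin x)) ((Real.sin θ)⁻¹ * Real.cos θ) θ := by
    have := (Real.hasDerivAt_log (ne_of_gt hS1)).comp θ (Real.hasDerivAt_sin θ)
    simpa [Function.comp_def, div_eq_inv_mul] using this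
  have h5 : HasDerivAt (fun x : ℝ => ((m:ℝ)-1) * x) ((m:ℝ)-1) θ := by
    simpa using (hasDerivAt_id θ).const_mul ((m:ℝ)-1)
  have h6 : HasDerivAt (fun x : ℝ => - Real.sin (((m:ℝ)-1) * x))
      (-(Real.cos (((m:ℝ)-1)*θ) * ((m:ℝ)-1))) θ :=
    ((Real.hasDerivAt_sin (((m:ℝ)-1)*θ)).comp θ h5).neg
  have h7 : HasDerivAt (fun x : ℝ => Real.log (- Real.sin (((m:ℝ)-1) * x)))
      ((- Real.sin (((m:ℝ)-1)*θ))⁻¹ * (-(Real.cos (((m:ℝ)-1)*θ) * ((m:ℝ)-1)))) θ := by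
    have hne : - Real.sin (((m:ℝ)-1)*θ) ≠ 0 := by simp [ne_of_lt hS']
    exact (Real.hasDerivAt_log hne).comp θ h6
  exact ((h3.const_mul (m:ℝ)).sub h4).sub (h7.const_mul ((m:ℝ)-1))

lemma deriv_pos (m : ℕ) (hm : 3 ≤ m) {θ : ℝ}
    (hS1 : 0 < Real.sin θ) (hSm : 0 < Real.sin ((m : ℝ) * θ))
    (hS' : Real.sin (((m : ℝ) - 1) * θ) < 0) :
    0 < (m:ℝ) * ((Real.sin ((m:ℝ)*θ))⁻¹ * (Real.cos ((m:ℝ)*θ) * (m:ℝ)))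
        - (Real.sin θ)⁻¹ * Real.cos θ
        - ((m:ℝ)-1) * ((- Real.sin (((m:ℝ)-1)*θ))⁻¹ * (-(Real.cos (((m:ℝ)-1)*θ) * ((m:ℝ)-1)))) := by
  set S1 := Real.sin θ with hS1def
  set C1 := Real.cos θ with hC1def
  set Sm := Real.sin ((m:ℝ) * θ) with hSmdef
  set S' := Real.sin (((m:ℝ)-1) * θ) with hS'def
  set C' := Real.cos (((m:ℝ)-1) * θ) with hC'def
  have hsub : (m:ℝ) * θ - ((m:ℝ)-1) * θ = θ := by ring
  have hS1e : S1 = Sm * C' - Real.cos ((m:ℝ)*θ) * S' := by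
    have h := Real.sin_sub ((m:ℝ)*θ) (((m:ℝ)-1)*θ)
    rw [hsub] at h
    exact h
  have hC1e : C1 = Real.cos ((m:ℝ)*θ) * C' + Sm * S' := by
    have h := Real.cos_sub ((m:ℝ)*θ) (((m:ℝ)-1)*θ)
    rw [hsub] at h
    exact h
  set Cm := Real.cos ((m:ℝ) * θ) with hCmdef
  set D := (m:ℝ) * (Sm⁻¹ * (Cm * (m:ℝ))) - S1⁻¹ * C1 - ((m:ℝ)-1) * ((-S')⁻¹ * (-(C' * ((m:ℝ)-1)))) with hDdef
  have hP : 0 < S1 * Sm * (-S') := by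
    have : 0 < -S' := by linarith
    positivity
  have hkey : D * (S1 * Sm * (-S')) = ((m:ℝ) * Cm * S' - ((m:ℝ)-1) * C' * Sm)^2 + (Sm * S')^2 := by
    rw [hDdef, hS1e, hC1e]
    have h1 : Sm ≠ 0 := ne_of_gt hSm
    have h2 : S' ≠ 0 := ne_of_lt hS'
    have h3 : Sm * C' - Cm * S' ≠ 0 := by rw [← hS1e]; exact ne_of_gt hS1
    field_simp
    ring
  have hT : 0 < ((m:ℝ) * Cm * S' - ((m:ℝ)-1) * C' * Sm)^2 + (Sm * S')^2 := by
    have : Sm * S' ≠ 0 := mul_ne_zero (ne_of_gt hSm) (ne_of_lt hS')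
    positivity
  nlinarith [hkey, hP, hT]

lemma Lfun_strictMono (m : ℕ) (hm : 3 ≤ m) :
    StrictMonoOn (Lfun m) (Set.Ioo (2 * π / (m : ℝ)) (2 * π / ((m : ℝ) - 1))) := by
  apply strictMonoOn_of_deriv_pos (convex_Ioo _ _)
  · intro x hx
    obtain ⟨hS1, hSm, hS'⟩ := sign_facts m hm hx
    exact (Lfun_hasDerivAt m hS1 hSm hS').continuousAt.continuousWithinAt
  · intro x hx
    rw [interior_Ioo] at hx
    obtain ⟨hS1, hSm, hS'⟩ := sign_facts m hm hx
    rw [(Lfun_hasDerivAt m hS1 hSm hS').deriv]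
    exact deriv_pos m hm hS1 hSm hS'

lemma Lfun_val (m : ℕ) (hm : 3 ≤ m) {θ c : ℝ}
    (hS1 : 0 < Real.sin θ) (hSm : 0 < Real.sin ((m : ℝ) * θ))
    (hS' : Real.sin (((m : ℝ) - 1) * θ) < 0)
    (hc : 0 < c) (hc1 : c < 1)
    (hEQ : (1 - c) ^ (m - 1) * Real.sin ((m : ℝ) * θ) ^ m
      = c ^ m * Real.sin θ * (- Real.sin (((m : ℝ) - 1) * θ)) ^ (m - 1)) :
    Lfun m θ = Real.log (c ^ m / (1 - c) ^ (m - 1)) := by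
  set S1 := Real.sin θ with hS1def
  set Sm := Real.sin ((m:ℝ) * θ) with hSmdef
  set S' := Real.sin (((m:ℝ)-1) * θ) with hS'def
  have hS'neg : 0 < -S' := by linarith
  have hcast : ((m:ℝ) - 1) = ((m - 1 : ℕ) : ℝ) := by
    have : (1:ℕ) ≤ m := by omega
    push_cast [this]; ring
  have hLeq : Lfun m θ = Real.log (Sm ^ m / (S1 * (-S') ^ (m-1))) := by
    rw [Lfun]
    rw [Real.log_div (by positivity) (by positivity)]
    rw [Real.log_mul (by positivity) (by positivity)]
    rw [Real.log_pow, Real.log_pow, ← hcast]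
    ring
  rw [hLeq]
  congr 1
  have h1c : (0:ℝ) < 1 - c := by linarith
  rw [div_eq_div_iff (by positivity) (by positivity)]
  linarith [hEQ]

lemma exists_theta (m : ℕ) (hm : 3 ≤ m) {c : ℝ} (hc : 0 < c) (hc1 : c < 1)
    (hc3 : m = 3 → c < 3 / 4) :
    ∃ θ ∈ Set.Ioo (2 * π / (m : ℝ)) (2 * π / ((m : ℝ) - 1)),
      (1 - c) ^ (m - 1) * Real.sin ((m : ℝ) * θ) ^ m
        = c ^ m * Real.sin θ * (- Real.sin (((m : ℝ) - 1) * θ)) ^ (m - 1) := by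
  have hπ : 0 < π := Real.pi_pos
  rcases eq_or_lt_of_le hm with hm3 | hm4
  · -- m = 3
    have hm3' : m = 3 := hm3.symm
    subst hm3'
    have hc34 : c < 3/4 := hc3 rfl
    have hb : 2 * π / ((3:ℕ) : ℝ) = 2 * π / 3 := by norm_num
    have hb2 : 2 * π / (((3:ℕ) : ℝ) - 1) = π := by norm_num
    set f : ℝ → ℝ := fun θ => (1-c)^2 * (4 * Real.cos θ ^ 2 - 1)^3 - 4 * c^3 * Real.cos θ ^ 2 with hfdef
    have hcont : ContinuousOn f (Set.Icc (2*π/3) π) := by fun_prop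
    have hfa : f (2*π/3) = -c^3 := by
      have h5 : Real.cos (2*π/3) = -(1/2) := by
        rw [show (2*π/3 : ℝ) = π - π/3 by ring, Real.cos_pi_sub, Real.cos_pi_div_three]
      rw [hfdef]; simp only [h5]; ring
    have hfb : f π = 27 * (1-c)^2 - 4 * c^3 := by
      rw [hfdef]; simp [Real.cos_pi]; ring
    have hfapos : f (2*π/3) < 0 := by rw [hfa]; nlinarith [pow_pos hc 3]
    have hfbpos : 0 < f π := by
      rw [hfb]
      have h9 : 0 < (c - 3)^2 := by nlinarith
      nlinarith [mul_pos (show (0:ℝ) < 3 - 4*c by linarith) h9]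
    have hab : 2*π/3 ≤ π := by linarith
    have h0 : (0:ℝ) ∈ Set.Ioo (f (2*π/3)) (f π) := ⟨hfapos, hfbpos⟩
    obtain ⟨θ0, hθ0mem, hθ0⟩ := intermediate_value_Ioo hab hcont h0
    refine ⟨θ0, by rw [hb, hb2]; exact hθ0mem, ?_⟩
    have hs : 0 < Real.sin θ0 := Real.sin_pos_of_pos_of_lt_pi (by nlinarith [hθ0mem.1]) hθ0mem.2
    have hpy := Real.sin_sq_add_cos_sq θ0
    have h3 : Real.sin (((3:ℕ):ℝ) * θ0) = Real.sin θ0 * (4 * Real.cos θ0 ^ 2 - 1) := by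
      push_cast
      rw [Real.sin_three_mul]
      linear_combination (-4 * Real.sin θ0) * hpy
    have h2 : Real.sin ((((3:ℕ):ℝ) - 1) * θ0) = 2 * Real.sin θ0 * Real.cos θ0 := by
      norm_num
      rw [show (2:ℝ) * θ0 = θ0 + θ0 by ring, Real.sin_add]
      ring
    rw [h3, h2]
    simp only [show (3:ℕ) - 1 = 2 from rfl]
    have hf0 : (1-c)^2 * (4 * Real.cos θ0 ^ 2 - 1)^3 - 4 * c^3 * Real.cos θ0 ^ 2 = 0 := hθ0
    linear_combination (Real.sin θ0 ^ 3) * hf0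
  · -- m ≥ 4
    have hm4' : 4 ≤ m := by omega
    have hmr : (4:ℝ) ≤ (m:ℝ) := by exact_mod_cast hm4'
    have hm0 : (0:ℝ) < (m:ℝ) := by linarith
    have hm1 : (0:ℝ) < (m:ℝ) - 1 := by linarith
    set a := 2 * π / (m:ℝ) with hadef
    set b := 2 * π / ((m:ℝ) - 1) with hbdef
    have hab : a < b := by
      rw [hadef, hbdef, div_lt_div_iff₀ hm0 hm1]
      nlinarith
    set f : ℝ → ℝ := fun θ => (1 - c) ^ (m - 1) * Real.sin ((m : ℝ) * θ) ^ m
        - c ^ m * Real.sin θ * (- Real.sin (((m : ℝ) - 1) * θ)) ^ (m - 1) with hfdef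
    have hcont : ContinuousOn f (Set.Icc a b) := by fun_prop
    have hapos : 0 < a := by rw [hadef]; positivity
    have hsa : 0 < Real.sin a := by
      apply Real.sin_pos_of_pos_of_lt_pi hapos
      rw [hadef, div_lt_iff₀ hm0]; nlinarith
    have hbpos : 0 < b := by rw [hbdef]; positivity
    have hsb : 0 < Real.sin b := by
      apply Real.sin_pos_of_pos_of_lt_pi hbpos
      rw [hbdef, div_lt_iff₀ hm1]; nlinarith
    have hm00 : m ≠ 0 := by omega
    have hm10 : m - 1 ≠ 0 := by omega
    have hfa : f a = - (c ^ m * Real.sin a ^ m) := by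
      rw [hfdef]
      have e1 : (m:ℝ) * a = 2 * π := by rw [hadef]; field_simp
      have e2 : ((m:ℝ) - 1) * a = 2 * π - a := by rw [hadef]; field_simp
      simp only [e1, e2, Real.sin_two_pi]
      have e3 : Real.sin (2 * π - a) = - Real.sin a := by
        rw [Real.sin_sub]; simp
      rw [e3]
      simp only [neg_neg]
      rw [zero_pow hm00, mul_zero, zero_sub, mul_assoc]
      rw [show Real.sin a * Real.sin a ^ (m-1) = Real.sin a ^ m by
        rw [← pow_succ']; congr 1; omega]
    have hfb : f b = (1 - c) ^ (m - 1) * Real.sin b ^ m := by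
      rw [hfdef]
      have e1 : ((m:ℝ) - 1) * b = 2 * π := by rw [hbdef]; field_simp
      have e2 : (m:ℝ) * b = 2 * π + b := by rw [hbdef]; field_simp; ring
      simp only [e1, e2, Real.sin_two_pi]
      have e3 : Real.sin (2 * π + b) = Real.sin b := by
        rw [Real.sin_add]; simp
      rw [e3, neg_zero, zero_pow hm10]
      ring
    have hfaneg : f a < 0 := by
      rw [hfa]
      have : 0 < c ^ m * Real.sin a ^ m := by positivity
      linarith
    have hfbpos : 0 < f b := by
      rw [hfb]
      have h1c : (0:ℝ) < 1 - c := by linarith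
      positivity
    have h0 : (0:ℝ) ∈ Set.Ioo (f a) (f b) := ⟨hfaneg, hfbpos⟩
    obtain ⟨θ0, hθ0mem, hθ0⟩ := intermediate_value_Ioo hab.le hcont h0
    refine ⟨θ0, hθ0mem, ?_⟩
    rw [hfdef] at hθ0
    simp only at hθ0
    linarith [hθ0]

/-- For `m ≥ 4` and every `c ∈ (0,1)` (resp. `m = 3` and every `c ∈ (0,3/4)`) there is a
unique `θ ∈ (2π/m, 2π/(m-1))` such that `c = r_θ^{m-1}·sin(mθ)/sin θ`, where `r_θ` is the
unique positive real root of `g_θ`. -/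
theorem stmt_11 (m : ℕ) (hm : 3 ≤ m) (c : ℝ) (hc : c ∈ Set.Ioo (0 : ℝ) 1)
    (hc3 : m = 3 → c < 3 / 4) :
    ∃! θ : ℝ, θ ∈ Set.Ioo (2 * π / (m : ℝ)) (2 * π / ((m : ℝ) - 1)) ∧
      ∃ r : ℝ, 0 < r ∧ gpoly m θ r = 0 ∧ (∀ s : ℝ, 0 < s → gpoly m θ s = 0 → s = r) ∧
        c = r ^ (m - 1) * Real.sin ((m : ℝ) * θ) / Real.sin θ := by
  obtain ⟨hc0, hc1⟩ := hc
  obtain ⟨θ0, hθ0mem, hθ0EQ⟩ := exists_theta m hm hc0 hc1 hc3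
  obtain ⟨hS1, hSm, hS'⟩ := sign_facts m hm hθ0mem
  obtain ⟨r, hrpos, hroot, hcr⟩ := backward_eq m hm hS1 hSm hS' hc0 hc1 hθ0EQ
  refine ⟨θ0, ⟨hθ0mem, r, hrpos, hroot, ?_, hcr⟩, ?_⟩
  · intro s hs hgs
    exact root_unique m hm hS1 hSm hS' hs hrpos hgs hroot
  · rintro θ' ⟨hθ'mem, r', hr'pos, hroot', _, hcr'⟩
    obtain ⟨hS1', hSm', hS''⟩ := sign_facts m hm hθ'mem
    have hEQ' := forward_eq m hm hS1' hSm' hS'' hc0 hr'pos hroot' hcr'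
    have hv1 := Lfun_val m hm hS1' hSm' hS'' hc0 hc1 hEQ'
    have hv2 := Lfun_val m hm hS1 hSm hS' hc0 hc1 hθ0EQ
    exact (Lfun_strictMono m hm).injOn hθ'mem hθ0mem (by rw [hv1, hv2])
end
end

section
/- Let m ≥ 2 be an integer and let S be a nonempty proper subset of the set of all m-th roots of unity in ℂ, with n = |S|, and let S^c denote the complement of S in the set of m-th roots of unity. Then for every j with 1 ≤ j ≤ m − n, h_j(S) = (−1)^j · σ_j(S^c), where h_j(S) is the j-th complete homogeneous symmetric polynomial evaluated at the elements of S and σ_j(S^c) is the j-th elementary symmetric function of the elements of S^c. -/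
noncomputable section

/-- The `k`-th complete homogeneous symmetric polynomial evaluated at the elements of a
finite set `S ⊆ ℂ`. -/
def hsymFinset (S : Finset ℂ) (k : ℕ) : ℂ :=
  ∑ d ∈ Finset.Nat.antidiagonalTuple S.card k, ∏ i, (S.equivFin.symm i).1 ^ d i

/-- The `k`-th elementary symmetric function of the elements of a finite set `T ⊆ ℂ`. -/
def esymFinset (T : Finset ℂ) (k : ℕ) : ℂ :=
  ∑ s ∈ T.powersetCard k, ∏ z ∈ s, z

open Finset Polynomial

lemma geom_inv (z : ℂ) :
    ((1 : PowerSeries ℂ) - PowerSeries.C z * PowerSeries.X) *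
      PowerSeries.mk (fun n => z ^ n) = 1 := by
  ext n
  rw [sub_mul, one_mul, map_sub, mul_assoc]
  cases n with
  | zero => simp
  | succ n =>
    rw [PowerSeries.coeff_C_mul, PowerSeries.coeff_succ_X_mul, PowerSeries.coeff_mk,
      PowerSeries.coeff_mk, pow_succ]
    simp [mul_comm]

lemma prod_one_sub_roots (m : ℕ) (hm : 0 < m) :
    ∏ ζ ∈ nthRootsFinset m (1 : ℂ), (1 - Polynomial.C ζ * Polynomial.X) =
      1 - (Polynomial.X : ℂ[X]) ^ m := by
  have hprim := Complex.isPrimitiveRoot_exp m hm.ne'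
  have hprod : (Polynomial.X ^ m - 1 : ℂ[X]) =
      ∏ ζ ∈ nthRootsFinset m (1 : ℂ), (Polynomial.X - Polynomial.C ζ) :=
    Polynomial.X_pow_sub_one_eq_prod hm hprim
  have hzero : ∏ ζ ∈ nthRootsFinset m (1 : ℂ), (-ζ) = -1 := by
    have h := congrArg (Polynomial.eval 0) hprod
    simpa [Polynomial.eval_prod, zero_pow hm.ne'] using h.symm
  have hfac : ∀ ζ ∈ nthRootsFinset m (1 : ℂ),
      (1 - Polynomial.C ζ * Polynomial.X : ℂ[X]) =
        Polynomial.C (-ζ) * (Polynomial.X - Polynomial.C ζ⁻¹) := by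
    intro ζ hζ
    have hne : ζ ≠ 0 := Polynomial.ne_zero_of_mem_nthRootsFinset one_ne_zero hζ
    have : (ζ : ℂ) * ζ⁻¹ = 1 := mul_inv_cancel₀ hne
    rw [map_neg, neg_mul, mul_sub, ← Polynomial.C_mul, this, Polynomial.C_1]
    ring
  rw [Finset.prod_congr rfl hfac, Finset.prod_mul_distrib]
  have hmem : ∀ ζ ∈ nthRootsFinset m (1 : ℂ), ζ⁻¹ ∈ nthRootsFinset m (1 : ℂ) := by
    intro ζ hζ
    rw [Polynomial.mem_nthRootsFinset hm] at hζ ⊢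
    rw [inv_pow, hζ, inv_one]
  have hinv : ∏ ζ ∈ nthRootsFinset m (1 : ℂ), (Polynomial.X - Polynomial.C ζ⁻¹) =
      ∏ ζ ∈ nthRootsFinset m (1 : ℂ), (Polynomial.X - Polynomial.C ζ) := by
    apply Finset.prod_nbij' (fun ζ => ζ⁻¹) (fun ζ => ζ⁻¹) hmem hmem
    · intro a _; simp
    · intro a _; simp
    · intro a _; rfl
  rw [hinv, ← hprod, ← map_prod, hzero]
  simp only [map_neg, Polynomial.C_1]
  ring

lemma coeff_prod_one_sub (T : Finset ℂ) (k : ℕ) :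
    (∏ z ∈ T, (1 - Polynomial.C z * Polynomial.X)).coeff k
      = (-1 : ℂ) ^ k * esymFinset T k := by
  induction T using Finset.induction generalizing k with
  | empty =>
    cases k with
    | zero => simp [esymFinset]
    | succ k =>
      have : Finset.powersetCard (k+1) (∅ : Finset ℂ) = ∅ := by
        rw [Finset.powersetCard_eq_empty]; simp
      simp [esymFinset, this, Polynomial.coeff_one]
  | @insert a T ha ih =>
    rw [Finset.prod_insert ha]
    set P := ∏ z ∈ T, (1 - Polynomial.C z * Polynomial.X) with hP
    cases k with
    | zero =>
      rw [Polynomial.mul_coeff_zero]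
      have h0 : ∀ (U : Finset ℂ), esymFinset U 0 = 1 := by
        intro U; simp [esymFinset]
      simp [ih 0, h0]
    | succ k =>
      have hco : ((1 - Polynomial.C a * Polynomial.X) * P).coeff (k + 1)
          = P.coeff (k + 1) - a * P.coeff k := by
        rw [sub_mul, one_mul, Polynomial.coeff_sub, mul_assoc, Polynomial.coeff_C_mul,
          Polynomial.coeff_X_mul]
      have hesym : esymFinset (insert a T) (k + 1)
          = esymFinset T (k + 1) + a * esymFinset T k := by
        unfold esymFinset
        rw [Finset.powersetCard_succ_insert ha, Finset.sum_union, Finset.sum_image]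
        · congr 1
          rw [Finset.mul_sum]
          apply Finset.sum_congr rfl
          intro s hs
          have has : a ∉ s := fun h => ha ((Finset.mem_powersetCard.1 hs).1 h)
          rw [Finset.prod_insert has]
        · intro s hs t ht hst
          have has : a ∉ s := fun h => ha ((Finset.mem_powersetCard.1 hs).1 h)
          have hat : a ∉ t := fun h => ha ((Finset.mem_powersetCard.1 ht).1 h)
          have h2 := congrArg (fun u => Finset.erase u a) hst
          simpa [Finset.erase_insert has, Finset.erase_insert hat] using h2
        · apply Finset.disjoint_left.2
          intro s hs hs'
          have has : a ∉ s := fun h => ha ((Finset.mem_powersetCard.1 hs).1 h)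
          obtain ⟨t, ht, rfl⟩ := Finset.mem_image.1 hs'
          exact has (Finset.mem_insert_self a t)
      rw [hco, hesym, ih, ih]
      ring

lemma coeff_geom_prod (S : Finset ℂ) (k : ℕ) :
    PowerSeries.coeff k (∏ z ∈ S, PowerSeries.mk fun n => z ^ n) = hsymFinset S k := by
  classical
  rw [PowerSeries.coeff_prod]
  simp only [PowerSeries.coeff_mk]
  unfold hsymFinset
  set e := S.equivFin with he
  apply Finset.sum_nbij' (i := fun l (i : Fin S.card) => l ((e.symm i : {x // x ∈ S}) : ℂ))
    (j := fun d => Finsupp.indicator S (fun z hz => d (e ⟨z, hz⟩)))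
  · intro l hl
    rw [Finset.mem_finsuppAntidiag] at hl
    rw [Finset.Nat.mem_antidiagonalTuple]
    calc ∑ i : Fin S.card, l ((e.symm i : {x // x ∈ S}) : ℂ)
        = ∑ x : {x // x ∈ S}, l (x : ℂ) := Equiv.sum_comp e.symm (fun x : {x // x ∈ S} => l (x : ℂ))
      _ = ∑ z ∈ S, l z := Finset.sum_coe_sort S _
      _ = k := hl.1
  · intro d hd
    rw [Finset.Nat.mem_antidiagonalTuple] at hd
    rw [Finset.mem_finsuppAntidiag]
    refine ⟨?_, fun z hz => ?_⟩
    · calc S.sum ⇑(Finsupp.indicator S fun z hz => d (e ⟨z, hz⟩))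
          = ∑ x : {x // x ∈ S},
              (Finsupp.indicator S fun z hz => d (e ⟨z, hz⟩)) (x : ℂ) :=
            (Finset.sum_coe_sort S _).symm
        _ = ∑ x : {x // x ∈ S}, d (e x) := by
            refine Finset.sum_congr rfl fun x _ => ?_
            rw [Finsupp.indicator_of_mem x.2]
        _ = ∑ i, d i := Equiv.sum_comp e d
        _ = k := hd
    · exact Finsupp.support_indicator_subset _ _ hz
  · intro l hl
    rw [Finset.mem_finsuppAntidiag] at hl
    ext z
    by_cases hz : z ∈ S
    · rw [Finsupp.indicator_of_mem hz]
      simp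
    · rw [Finsupp.indicator_of_notMem hz]
      exact (Finsupp.notMem_support_iff.1 (fun h => hz (hl.2 h))).symm
  · intro d hd
    funext i
    have hz : ((e.symm i : {x // x ∈ S}) : ℂ) ∈ S := (e.symm i).2
    rw [Finsupp.indicator_of_mem hz]
    simp
  · intro l hl
    calc ∏ z ∈ S, z ^ l z
        = ∏ x : {x // x ∈ S}, (x : ℂ) ^ l (x : ℂ) := (Finset.prod_coe_sort S _).symm
      _ = ∏ i, ((e.symm i : {x // x ∈ S}) : ℂ) ^ l ((e.symm i : {x // x ∈ S}) : ℂ) :=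
          (Equiv.prod_comp e.symm (fun x : {x // x ∈ S} => (x : ℂ) ^ l (x : ℂ))).symm

/-- Let `S` be a nonempty proper subset of the `m`-th roots of unity in `ℂ`, `n = |S|`, and
`S^c` its complement among the `m`-th roots of unity.  Then for `1 ≤ j ≤ m - n`,
`h_j(S) = (-1)^j · σ_j(S^c)`. -/
theorem stmt_16 (m : ℕ) (hm : 2 ≤ m) (S : Finset ℂ)
    (hS : S ⊆ Polynomial.nthRootsFinset m (1 : ℂ)) (hne : S.Nonempty)
    (hproper : S ≠ Polynomial.nthRootsFinset m (1 : ℂ))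
    (j : ℕ) (hj1 : 1 ≤ j) (hj2 : j ≤ m - S.card) :
    hsymFinset S j = (-1 : ℂ) ^ j * esymFinset (Polynomial.nthRootsFinset m (1 : ℂ) \ S) j := by

  classical
  have hm0 : 0 < m := by omega
  set T := Polynomial.nthRootsFinset m (1 : ℂ) \ S with hT
  have hST : Disjoint S T := Finset.disjoint_sdiff
  have hunion : S ∪ T = Polynomial.nthRootsFinset m (1 : ℂ) := Finset.union_sdiff_of_subset hS
  set A : ℂ[X] := ∏ z ∈ S, (1 - Polynomial.C z * Polynomial.X) with hA
  set B : ℂ[X] := ∏ z ∈ T, (1 - Polynomial.C z * Polynomial.X) with hB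
  have hAB : A * B = 1 - Polynomial.X ^ m := by
    rw [hA, hB, ← Finset.prod_union hST, hunion]
    exact prod_one_sub_roots m hm0
  set G : PowerSeries ℂ := ∏ z ∈ S, PowerSeries.mk (fun n => z ^ n) with hG
  have hAcoe : (A : PowerSeries ℂ)
      = ∏ z ∈ S, ((1 : PowerSeries ℂ) - PowerSeries.C z * PowerSeries.X) := by
    rw [hA]
    calc ((∏ z ∈ S, (1 - Polynomial.C z * Polynomial.X) : ℂ[X]) : PowerSeries ℂ)
        = Polynomial.coeToPowerSeries.ringHom
            (∏ z ∈ S, (1 - Polynomial.C z * Polynomial.X)) := rfl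
      _ = ∏ z ∈ S, Polynomial.coeToPowerSeries.ringHom
            (1 - Polynomial.C z * Polynomial.X) := map_prod _ _ _
      _ = ∏ z ∈ S, ((1 : PowerSeries ℂ) - PowerSeries.C z * PowerSeries.X) := by
          refine Finset.prod_congr rfl fun z _ => ?_
          rw [map_sub, map_one, map_mul]
          simp
  have hAG : (A : PowerSeries ℂ) * G = 1 := by
    rw [hAcoe, hG, ← Finset.prod_mul_distrib]
    exact Finset.prod_eq_one fun z _ => geom_inv z
  have hBeq : (B : PowerSeries ℂ) = ((1 : PowerSeries ℂ) - PowerSeries.X ^ m) * G := by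
    calc (B : PowerSeries ℂ) = (B : PowerSeries ℂ) * ((A : PowerSeries ℂ) * G) := by
          rw [hAG, mul_one]
      _ = ((A : PowerSeries ℂ) * (B : PowerSeries ℂ)) * G := by ring
      _ = ((A * B : ℂ[X]) : PowerSeries ℂ) * G := by rw [Polynomial.coe_mul]
      _ = ((1 : PowerSeries ℂ) - PowerSeries.X ^ m) * G := by
          rw [hAB]
          push_cast
          rfl
  have hjm : j < m := by
    have hcard : 1 ≤ S.card := Finset.card_pos.2 hne
    omega
  have hL : PowerSeries.coeff j (B : PowerSeries ℂ) = (-1 : ℂ) ^ j * esymFinset T j := by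
    rw [Polynomial.coeff_coe]
    exact coeff_prod_one_sub T j
  have hR : PowerSeries.coeff j (((1 : PowerSeries ℂ) - PowerSeries.X ^ m) * G)
      = hsymFinset S j := by
    rw [sub_mul, one_mul, map_sub, hG, coeff_geom_prod, PowerSeries.coeff_X_pow_mul',
      if_neg (by omega), sub_zero]
  rw [← hR, ← hBeq, hL]
end
end
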